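/- The optimal quantum CHSH strategy wins with probability cos²(π/8): let θ_A(0) = π/4, θ_A(1) = 0, θ_B(0) = π/8, θ_B(1) = 3π/8, and let w_{θ,0} = u_θ, w_{θ,1} = u_θ^⊥. Then (1/4) · Σ_{q1,q2∈{0,1}} Σ_{(a1,a2)∈{0,1}², a1 XOR a2 = q1 AND q2} |⟨ w_{θ_A(q1),a1} ⊗ w_{θ_B(q2),a2}, ψ ⟩|² = cos²(π/8), where ψ is the EPR pair. -/

import Mathlib

/-- The measurement basis vector at angle `θ` with outcome `0`:
`u_θ = cos θ · e₀ + sin θ · e₁`. -/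
noncomputable def basisVec (θ : ℝ) : Bool → ℂ :=
  fun b => if b then (Real.sin θ : ℂ) else (Real.cos θ : ℂ)

/-- The measurement basis vector at angle `θ` with outcome `1`:
`u_θ^⊥ = −sin θ · e₀ + cos θ · e₁`. -/
noncomputable def basisVecPerp (θ : ℝ) : Bool → ℂ :=
  fun b => if b then (Real.cos θ : ℂ) else (-(Real.sin θ) : ℂ)

/-- `w_{θ,a}`: the basis vector at angle `θ` with outcome `a`. -/
noncomputable def w (θ : ℝ) (a : Bool) : Bool → ℂ :=
  if a then basisVecPerp θ else basisVec θ

/-- Tensor product of two qubit vectors: `(u ⊗ v)(i,j) = uᵢ · vⱼ`. -/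
def tensor (u v : Bool → ℂ) : Bool × Bool → ℂ :=
  fun p => u p.1 * v p.2

/-- The EPR pair `ψ = (e₀⊗e₀ + e₁⊗e₁)/√2`. -/
noncomputable def eprPair : Bool × Bool → ℂ :=
  fun p => if p.1 = p.2 then ((1 / Real.sqrt 2 : ℝ) : ℂ) else 0

/-- The Hermitian inner product on `ℂ² ⊗ ℂ² ≅ ℂ⁴`. -/
noncomputable def hInner (u v : Bool × Bool → ℂ) : ℂ :=
  ∑ p : Bool × Bool, (starRingEnd ℂ) (u p) * v p

/-- Player A's measurement angle: `θ_A(0) = π/4`, `θ_A(1) = 0`. -/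
noncomputable def thetaA (q : Bool) : ℝ := if q then 0 else Real.pi / 4

/-- Player B's measurement angle: `θ_B(0) = π/8`, `θ_B(1) = 3π/8`. -/
noncomputable def thetaB (q : Bool) : ℝ :=
  if q then 3 * Real.pi / 8 else Real.pi / 8

private lemma key (α β : ℝ) (a b : Bool) :
    ‖hInner (tensor (w α a) (w β b)) eprPair‖ ^ 2 =
      (if xor a b then Real.sin (α - β) else Real.cos (α - β)) ^ 2 / 2 := by
  have h2 : Real.sqrt 2 ≠ 0 := by positivity
  have h2 : (Real.sqrt 2)^2 = 2 := Real.sq_sqrt (by norm_num)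
  have h2' : Real.sqrt 2 ≠ 0 := by positivity
  cases a <;> cases b <;>
  · simp only [hInner, tensor, w, basisVec, basisVecPerp, eprPair, Bool.xor_false,
      Bool.xor_true, Fintype.sum_prod_type, Fintype.sum_bool, Bool.false_eq_true,
      Bool.true_eq_false, if_true, if_false, reduceIte, Real.cos_sub, Real.sin_sub,
      ← Complex.ofReal_mul, ← Complex.ofReal_neg, Complex.conj_ofReal,
      ← Complex.ofReal_add, Complex.norm_real, Real.norm_eq_abs, sq_abs, mul_zero, add_zero, zero_add,
      Bool.not_false, Bool.not_true]
    field_simp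
    try nlinarith [h2]

/-- The optimal quantum CHSH strategy wins with probability `cos²(π/8)`. -/
theorem chsh_quantum_strategy_value :
    (1 / 4 : ℝ) *
      ∑ q : Bool × Bool,
        ∑ a ∈ Finset.univ.filter
            (fun a : Bool × Bool => xor a.1 a.2 = (q.1 && q.2)),
          ‖hInner (tensor (w (thetaA q.1) a.1) (w (thetaB q.2) a.2)) eprPair‖ ^ 2 =
    Real.cos (Real.pi / 8) ^ 2 := by
  have hA : Real.pi/4 - Real.pi/8 = Real.pi/8 := by ring
  have hB : Real.pi/4 - 3*Real.pi/8 = -(Real.pi/8) := by ring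
  have hC : (0:ℝ) - Real.pi/8 = -(Real.pi/8) := by ring
  have hD : (0:ℝ) - 3*Real.pi/8 = -(3*Real.pi/8) := by ring
  have hs : Real.sin (3*Real.pi/8) = Real.cos (Real.pi/8) := by
    rw [← Real.cos_pi_div_two_sub]; ring_nf
  simp only [Fintype.sum_prod_type, Fintype.sum_bool, Finset.sum_filter, key,
    thetaA, thetaB, if_true, if_false, Bool.false_eq_true, Bool.true_eq_false, reduceIte,
    Bool.xor_false, Bool.xor_true, Bool.not_true, Bool.not_false, Bool.false_and,
    Bool.true_and, Bool.and_false, Bool.and_true, Bool.false_xor, Bool.true_xor]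
  rw [hA, hB, hC, hD, Real.cos_neg, Real.sin_neg, hs]
  ring
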